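/- The characteristic polynomial of the quasilinear coefficient matrix M of the two-fluid model factors completely over the reals: for every λ ∈ ℝ, det(M − λ·I₇) = (u − λ)·(u₁ − λ)·((u₁ − λ)² − c₁²)·(u₂ − λ)·((u₂ − λ)² − c₂²). In particular the eigenvalues of M are u, u₁, u₁ ± c₁, u₂, u₂ ± c₂, all real. -/

import Mathlib

open Matrix

private lemma peel_2_1 {α : Type*} (a : α) (t : Fin 1 → α) :
    Matrix.vecCons a t (1 : Fin 2) = t 0 := rfl

private lemma peel_3_1 {α : Type*} (a : α) (t : Fin 2 → α) :
    Matrix.vecCons a t (1 : Fin 3) = t 0 := rfl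

private lemma peel_3_2 {α : Type*} (a : α) (t : Fin 2 → α) :
    Matrix.vecCons a t (2 : Fin 3) = t 1 := rfl

private lemma peel_4_1 {α : Type*} (a : α) (t : Fin 3 → α) :
    Matrix.vecCons a t (1 : Fin 4) = t 0 := rfl

private lemma peel_4_2 {α : Type*} (a : α) (t : Fin 3 → α) :
    Matrix.vecCons a t (2 : Fin 4) = t 1 := rfl

private lemma peel_4_3 {α : Type*} (a : α) (t : Fin 3 → α) :
    Matrix.vecCons a t (3 : Fin 4) = t 2 := rfl

private lemma peel_5_1 {α : Type*} (a : α) (t : Fin 4 → α) :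
    Matrix.vecCons a t (1 : Fin 5) = t 0 := rfl

private lemma peel_5_2 {α : Type*} (a : α) (t : Fin 4 → α) :
    Matrix.vecCons a t (2 : Fin 5) = t 1 := rfl

private lemma peel_5_3 {α : Type*} (a : α) (t : Fin 4 → α) :
    Matrix.vecCons a t (3 : Fin 5) = t 2 := rfl

private lemma peel_5_4 {α : Type*} (a : α) (t : Fin 4 → α) :
    Matrix.vecCons a t (4 : Fin 5) = t 3 := rfl

private lemma peel_6_1 {α : Type*} (a : α) (t : Fin 5 → α) :
    Matrix.vecCons a t (1 : Fin 6) = t 0 := rfl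

private lemma peel_6_2 {α : Type*} (a : α) (t : Fin 5 → α) :
    Matrix.vecCons a t (2 : Fin 6) = t 1 := rfl

private lemma peel_6_3 {α : Type*} (a : α) (t : Fin 5 → α) :
    Matrix.vecCons a t (3 : Fin 6) = t 2 := rfl

private lemma peel_6_4 {α : Type*} (a : α) (t : Fin 5 → α) :
    Matrix.vecCons a t (4 : Fin 6) = t 3 := rfl

private lemma peel_6_5 {α : Type*} (a : α) (t : Fin 5 → α) :
    Matrix.vecCons a t (5 : Fin 6) = t 4 := rfl

private lemma peel_7_1 {α : Type*} (a : α) (t : Fin 6 → α) :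
    Matrix.vecCons a t (1 : Fin 7) = t 0 := rfl

private lemma peel_7_2 {α : Type*} (a : α) (t : Fin 6 → α) :
    Matrix.vecCons a t (2 : Fin 7) = t 1 := rfl

private lemma peel_7_3 {α : Type*} (a : α) (t : Fin 6 → α) :
    Matrix.vecCons a t (3 : Fin 7) = t 2 := rfl

private lemma peel_7_4 {α : Type*} (a : α) (t : Fin 6 → α) :
    Matrix.vecCons a t (4 : Fin 7) = t 3 := rfl

private lemma peel_7_5 {α : Type*} (a : α) (t : Fin 6 → α) :
    Matrix.vecCons a t (5 : Fin 7) = t 4 := rfl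

private lemma peel_7_6 {α : Type*} (a : α) (t : Fin 6 → α) :
    Matrix.vecCons a t (6 : Fin 7) = t 5 := rfl

set_option maxHeartbeats 1000000 in
set_option maxRecDepth 20000 in
private lemma det6_aux (a1 b1 c1 d1 e1 a2 b2 c2 d2 f : ℝ) :
    (!![a1, b1, 0, 0, 0, 0;
        c1, d1, 0, 0, 0, 0;
        0, 0, e1, 0, 0, 0;
        0, 0, 0, a2, b2, 0;
        0, 0, 0, c2, d2, 0;
        0, 0, 0, 0, 0, f] : Matrix (Fin 6) (Fin 6) ℝ).det
      = (a1 * d1 - b1 * c1) * e1 * (a2 * d2 - b2 * c2) * f := by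
  simp [Matrix.det_succ_row_zero, Fin.sum_univ_succ, Fin.succAbove, Fin.succ_ne_zero,
    Matrix.cons_val_succ, Fin.succ_zero_eq_one]
  ring

set_option maxHeartbeats 1000000 in
set_option maxRecDepth 20000 in
private lemma det7_aux (t x1 x2 x3 x4 a1 b1 c1 d1 e1 a2 b2 c2 d2 e2 : ℝ) :
    (!![t, 0, 0, 0, 0, 0, 0;
        x1, a1, b1, 0, 0, 0, 0;
        x2, c1, d1, 0, 0, 0, 0;
        0, 0, 0, e1, 0, 0, 0;
        x3, 0, 0, 0, a2, b2, 0;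
        x4, 0, 0, 0, c2, d2, 0;
        0, 0, 0, 0, 0, 0, e2] : Matrix (Fin 7) (Fin 7) ℝ).det
      = t * (a1 * d1 - b1 * c1) * e1 * (a2 * d2 - b2 * c2) * e2 := by
  rw [Matrix.det_succ_row_zero]
  simp only [Fin.sum_univ_succ, Fin.sum_univ_zero]
  norm_num
  have hsub : (!![t, 0, 0, 0, 0, 0, 0;
        x1, a1, b1, 0, 0, 0, 0;
        x2, c1, d1, 0, 0, 0, 0;
        0, 0, 0, e1, 0, 0, 0;
        x3, 0, 0, 0, a2, b2, 0;
        x4, 0, 0, 0, c2, d2, 0;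
        0, 0, 0, 0, 0, 0, e2] : Matrix (Fin 7) (Fin 7) ℝ).submatrix Fin.succ Fin.succ
      = !![a1, b1, 0, 0, 0, 0;
        c1, d1, 0, 0, 0, 0;
        0, 0, e1, 0, 0, 0;
        0, 0, 0, a2, b2, 0;
        0, 0, 0, c2, d2, 0;
        0, 0, 0, 0, 0, e2] := by
    ext i j
    fin_cases i <;> fin_cases j <;> rfl
  rw [hsub, det6_aux]
  simp only [peel_7_2, peel_6_2, peel_5_2, peel_4_2, peel_3_2, Matrix.cons_val_one, Matrix.cons_val_zero,
    Matrix.head_cons, zero_mul, add_zero, sub_zero]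
  ring

set_option maxHeartbeats 1000000 in
set_option maxRecDepth 20000 in
/-- The characteristic polynomial of the quasilinear coefficient matrix `M` of the
two-fluid model factors completely over the reals. -/
theorem char_poly_factors_completely
    (α₁ ρ₁ ρ₂ c₁ c₂ u₁ u₂ p₁ p₂ : ℝ)
    (hα₁ : 0 < α₁) (hα₁' : α₁ < 1)
    (hρ₁ : 0 < ρ₁) (hρ₂ : 0 < ρ₂) (hc₁ : 0 < c₁) (hc₂ : 0 < c₂)
    (α₂ m₁ m₂ ρ Y₁ Y₂ u : ℝ)
    (hα₂ : α₂ = 1 - α₁) (hm₁ : m₁ = α₁ * ρ₁) (hm₂ : m₂ = α₂ * ρ₂)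
    (hρ : ρ = m₁ + m₂) (hY₁ : Y₁ = m₁ / ρ) (hY₂ : Y₂ = m₂ / ρ)
    (hu : u = Y₁ * u₁ + Y₂ * u₂)
    (M : Matrix (Fin 7) (Fin 7) ℝ)
    (hM : M = !![u, 0, 0, 0, 0, 0, 0;
                 (p₁ - p₂) / ρ, u₁, 1 / ρ₁, 0, 0, 0, 0;
                 -(ρ₁ * c₁ ^ 2 / α₁) * (u - u₁), ρ₁ * c₁ ^ 2, u₁, 0, 0, 0, 0;
                 0, 0, 0, u₁, 0, 0, 0;
                 (p₁ - p₂) / ρ, 0, 0, 0, u₂, 1 / ρ₂, 0;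
                 (ρ₂ * c₂ ^ 2 / α₂) * (u - u₂), 0, 0, 0, ρ₂ * c₂ ^ 2, u₂, 0;
                 0, 0, 0, 0, 0, 0, u₂]) :
    ∀ lam : ℝ, (M - lam • (1 : Matrix (Fin 7) (Fin 7) ℝ)).det =
      (u - lam) * (u₁ - lam) * ((u₁ - lam) ^ 2 - c₁ ^ 2) *
      (u₂ - lam) * ((u₂ - lam) ^ 2 - c₂ ^ 2) := by
  intro lam
  subst hM
  have h1 : ρ₁ ≠ 0 := ne_of_gt hρ₁
  have h2 : ρ₂ ≠ 0 := ne_of_gt hρ₂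
  have key : (!![u, 0, 0, 0, 0, 0, 0;
                 (p₁ - p₂) / ρ, u₁, 1 / ρ₁, 0, 0, 0, 0;
                 -(ρ₁ * c₁ ^ 2 / α₁) * (u - u₁), ρ₁ * c₁ ^ 2, u₁, 0, 0, 0, 0;
                 0, 0, 0, u₁, 0, 0, 0;
                 (p₁ - p₂) / ρ, 0, 0, 0, u₂, 1 / ρ₂, 0;
                 (ρ₂ * c₂ ^ 2 / α₂) * (u - u₂), 0, 0, 0, ρ₂ * c₂ ^ 2, u₂, 0;
                 0, 0, 0, 0, 0, 0, u₂] - lam • (1 : Matrix (Fin 7) (Fin 7) ℝ)) =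
      !![u - lam, 0, 0, 0, 0, 0, 0;
         (p₁ - p₂) / ρ, u₁ - lam, 1 / ρ₁, 0, 0, 0, 0;
         -(ρ₁ * c₁ ^ 2 / α₁) * (u - u₁), ρ₁ * c₁ ^ 2, u₁ - lam, 0, 0, 0, 0;
         0, 0, 0, u₁ - lam, 0, 0, 0;
         (p₁ - p₂) / ρ, 0, 0, 0, u₂ - lam, 1 / ρ₂, 0;
         (ρ₂ * c₂ ^ 2 / α₂) * (u - u₂), 0, 0, 0, ρ₂ * c₂ ^ 2, u₂ - lam, 0;
         0, 0, 0, 0, 0, 0, u₂ - lam] := by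
    ext i j
    fin_cases i <;> fin_cases j <;>
      simp [Matrix.sub_apply, Matrix.smul_apply, Matrix.one_apply,
        peel_2_1, peel_3_1, peel_3_2, peel_4_1, peel_4_2, peel_4_3, peel_5_1, peel_5_2, peel_5_3, peel_5_4, peel_6_1, peel_6_2, peel_6_3, peel_6_4, peel_6_5, peel_7_1, peel_7_2, peel_7_3, peel_7_4, peel_7_5, peel_7_6]
  rw [key, det7_aux]
  field_simp
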